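/- Let p be prime, q = p^r, 0 ≤ t < q, and m a positive integer. If m ≡ -t (mod q) then (-1)^t C(m+t-1,t) C(q+m-1, q-1-t) ≡ 1 (mod p), and if m ≢ -t (mod q) then this quantity is ≡ 0 (mod p). -/

import Mathlib

open Nat

lemma lucas_one (p : ℕ) [Fact p.Prime] (n k : ℕ) :
    ((n.choose k : ℕ) : ZMod p) =
      ((n % p).choose (k % p) : ℕ) * ((n / p).choose (k / p) : ℕ) := by
  have h := Choose.choose_modEq_choose_mod_mul_choose_div (n := n) (k := k) (p := p)
  have h2 := (ZMod.intCast_eq_intCast_iff _ _ _).mpr h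
  push_cast at h2
  exact_mod_cast h2

lemma lucas_pow (p : ℕ) [Fact p.Prime] (r : ℕ) (n k : ℕ) :
    ((n.choose k : ℕ) : ZMod p) =
      ((n / p ^ r).choose (k / p ^ r) : ℕ) * ((n % p ^ r).choose (k % p ^ r) : ℕ) := by
  induction r generalizing n k with
  | zero => simp [Nat.mod_one]
  | succ r ih =>
    rw [lucas_one p n k, ih (n / p) (k / p), lucas_one p (n % p ^ (r+1)) (k % p ^ (r+1))]
    have e1 : ∀ a : ℕ, a % p ^ (r+1) % p = a % p := fun a =>
      Nat.mod_mod_of_dvd a (dvd_pow_self p (Nat.succ_ne_zero r))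
    have e2 : ∀ a : ℕ, a % p ^ (r+1) / p = a / p % p ^ r := fun a => by
      rw [_root_.pow_succ']
      exact Nat.mod_mul_right_div_self a p (p ^ r)
    have e3 : ∀ a : ℕ, a / p ^ (r+1) = a / p / p ^ r := fun a => by
      rw [_root_.pow_succ', Nat.div_div_eq_div_mul]
    rw [e1, e1, e2, e2, e3, e3]
    ring

/-- decomposed form -/
lemma lucas_pow' (p : ℕ) [Fact p.Prime] (r : ℕ) (a b c d : ℕ) (hb : b < p ^ r) (hd : d < p ^ r) :
    (((p ^ r * a + b).choose (p ^ r * c + d) : ℕ) : ZMod p) =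
      ((a.choose c : ℕ) : ZMod p) * ((b.choose d : ℕ) : ZMod p) := by
  have hq : 0 < p ^ r := pow_pos (Fact.out (p := p.Prime)).pos r
  rw [lucas_pow p r]
  rw [Nat.mul_add_div hq, Nat.mul_add_div hq, Nat.div_eq_of_lt hb, Nat.div_eq_of_lt hd,
    Nat.mul_add_mod, Nat.mul_add_mod, Nat.mod_eq_of_lt hb, Nat.mod_eq_of_lt hd]
  simp

lemma choose_p_sub_one (p : ℕ) [hp : Fact p.Prime] (j : ℕ) (hj : j < p) :
    (((p - 1).choose j : ℕ) : ZMod p) = (-1) ^ j := by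
  induction j with
  | zero => simp
  | succ j ih =>
    have hj' : j < p := lt_of_succ_lt hj
    have key := Nat.choose_succ_right_eq (p - 1) j
    have hple : 2 ≤ p := hp.out.two_le
    have hsub : p - 1 - j = p - (j + 1) := by omega
    have hcast : ((p - 1 - j : ℕ) : ZMod p) = -(j + 1 : ℕ) := by
      rw [hsub]
      push_cast [Nat.cast_sub (by omega : j + 1 ≤ p)]
      simp
    have := congrArg (fun x : ℕ => (x : ZMod p)) key
    push_cast at this
    rw [hcast, ih hj'] at this
    have hne : ((j + 1 : ℕ) : ZMod p) ≠ 0 := by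
      rw [Ne, ZMod.natCast_eq_zero_iff]
      exact fun hdvd => absurd (Nat.le_of_dvd (Nat.succ_pos j) hdvd) (by omega)
    have : ((p - 1).choose (j + 1) : ZMod p) * ((j + 1 : ℕ) : ZMod p)
        = (-1) ^ (j + 1) * ((j + 1 : ℕ) : ZMod p) := by
      push_cast at this ⊢
      rw [this]; ring
    exact mul_right_cancel₀ hne (by exact_mod_cast this)

lemma choose_q_sub_one (p : ℕ) [hp : Fact p.Prime] (r t : ℕ) (ht : t < p ^ r) :
    (((p ^ r - 1).choose t : ℕ) : ZMod p) = (-1) ^ t := by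
  induction r generalizing t with
  | zero =>
    have : t = 0 := by simpa using ht
    simp [this]
  | succ r ih =>
    have hppos : 0 < p := hp.out.pos
    have hqpos : 0 < p ^ r := pow_pos hppos r
    rw [lucas_one]
    obtain ⟨Q, hQ⟩ : ∃ Q, p ^ r = Q + 1 := ⟨p ^ r - 1, by omega⟩
    have hps : p ^ (r+1) = p * Q + p := by rw [_root_.pow_succ', hQ, Nat.mul_succ]
    have hdec : p ^ (r+1) - 1 = p * Q + (p - 1) := by omega
    have e1 : (p ^ (r+1) - 1) % p = p - 1 := by
      rw [hdec, Nat.mul_add_mod, Nat.mod_eq_of_lt (by omega)]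
    have e2 : (p ^ (r+1) - 1) / p = p ^ r - 1 := by
      rw [hdec, Nat.mul_add_div hppos, Nat.div_eq_of_lt (by omega)]
      omega
    rw [e1, e2, choose_p_sub_one p _ (Nat.mod_lt t hppos),
      ih (t / p) (by rwa [Nat.div_lt_iff_lt_mul hppos, ← _root_.pow_succ])]
    have : (-1 : ZMod p) ^ t = ((-1) ^ p) ^ (t / p) * (-1) ^ (t % p) := by
      rw [← pow_mul, ← pow_add]
      congr 1
      exact (Nat.div_add_mod t p).symm
    rw [this, ZMod.pow_card]
    ring


/-- Let `p` be prime, `q = p^r`, `0 ≤ t < q`, `m ≥ 1`.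
If `m ≡ -t (mod q)` then `(-1)^t C(m+t-1,t) C(q+m-1, q-1-t) ≡ 1 (mod p)`,
and if `m ≢ -t (mod q)` then it is `≡ 0 (mod p)`. -/
theorem stmt_6 (p r : ℕ) (hp : p.Prime) (q : ℕ) (hq : q = p ^ r)
    (t m : ℕ) (ht : t < q) (hm : 1 ≤ m) :
    ((m : ℤ) ≡ -(t : ℤ) [ZMOD (q : ℤ)] →
      ((-1) ^ t * ((m + t - 1).choose t : ℤ) * ((q + m - 1).choose (q - 1 - t) : ℤ))
        ≡ 1 [ZMOD (p : ℤ)]) ∧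
    (¬ (m : ℤ) ≡ -(t : ℤ) [ZMOD (q : ℤ)] →
      ((-1) ^ t * ((m + t - 1).choose t : ℤ) * ((q + m - 1).choose (q - 1 - t) : ℤ))
        ≡ 0 [ZMOD (p : ℤ)]) := by
  haveI : Fact p.Prime := ⟨hp⟩
  subst hq
  set q := p ^ r with hq
  have hppos : 0 < p := hp.pos
  have hqpos : 0 < q := pow_pos hppos r
  have hiff : ((m : ℤ) ≡ -(t : ℤ) [ZMOD (q : ℤ)]) ↔ q ∣ m + t := by
    rw [Int.modEq_iff_dvd, show -(t:ℤ) - m = -((m+t : ℕ) : ℤ) by push_cast; ring,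
      dvd_neg, Int.natCast_dvd_natCast]
  constructor
  · intro hmod
    obtain ⟨s, hs⟩ := hiff.mp hmod
    obtain ⟨s', rfl⟩ : ∃ s', s = s' + 1 := by
      refine ⟨s - 1, ?_⟩
      rcases s with _ | s
      · simp at hs; omega
      · simp
    have hmul : q * (s' + 1) = q * s' + q := Nat.mul_succ q s'
    have key1 : m + t - 1 = q * s' + (q - 1) := by omega
    have key2 : q + m - 1 = q * (s' + 1) + (q - 1 - t) := by omega
    rw [← ZMod.intCast_eq_intCast_iff]
    push_cast
    rw [key1, key2]
    have c1 := lucas_pow' p r s' (q - 1) 0 t (by omega) ht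
    have c2 := lucas_pow' p r (s' + 1) (q - 1 - t) 0 (q - 1 - t) (by omega) (by omega)
    simp only [Nat.mul_zero, Nat.zero_add, ← hq] at c1 c2
    rw [c1, c2, choose_q_sub_one p r t (hq ▸ ht)]
    simp [Nat.choose_self, Nat.choose_zero_right, ← pow_add]
  · intro hmod
    have hnd : ¬ q ∣ m + t := fun h => hmod (hiff.mpr h)
    have hdm : q * ((m + t) / q) + (m + t) % q = m + t := Nat.div_add_mod _ _
    set u := (m + t) % q with hu
    set s := (m + t) / q with hsdef
    have hu0 : u ≠ 0 := fun h => hnd (Nat.dvd_of_mod_eq_zero h)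
    have huq : u < q := Nat.mod_lt _ hqpos
    rw [← ZMod.intCast_eq_intCast_iff]
    push_cast
    rcases le_or_gt u t with hut | htu
    · have key1 : m + t - 1 = q * s + (u - 1) := by omega
      rw [key1]
      have c1 := lucas_pow' p r s (u - 1) 0 t (by omega) ht
      simp only [Nat.mul_zero, Nat.zero_add, ← hq] at c1
      rw [c1, Nat.choose_eq_zero_of_lt (by omega : u - 1 < t)]
      simp
    · have hmul : q * (s + 1) = q * s + q := Nat.mul_succ q s
      have key2 : q + m - 1 = q * (s + 1) + (u - t - 1) := by omega
      rw [key2]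
      have c2 := lucas_pow' p r (s + 1) (u - t - 1) 0 (q - 1 - t) (by omega) (by omega)
      simp only [Nat.mul_zero, Nat.zero_add, ← hq] at c2
      rw [c2, Nat.choose_eq_zero_of_lt (by omega : u - t - 1 < q - 1 - t)]
      simp
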